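/- Let λ be a limit ordinal, f a continuous selection for 𝓕(X), and U_α ⊆ X, α < λ, open sets such that cl(U_{α+1}) ⊊ ⟨U_α⟩_f ⊆ U_β for every β ≤ α < λ. Put H_λ = ⋂_{α<λ} U_α and F_λ = cl(X \ H_λ). Then H_λ = [X \ F_λ]_f, the family {U_α : α < λ} forms a local base at the set H_λ (every open set containing H_λ contains some U_α), and both H_λ and F_λ are clopen modulo the point f(F_λ). -/

import Mathlib

open Set Topology Filter

universe u v

/-- The hyperspace `𝓕(X)` of all nonempty closed subsets of a topological space `X`. -/
structure NEClosed (X : Type u) [TopologicalSpace X] : Type u where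
  carrier : Set X
  nonempty' : carrier.Nonempty
  closed' : IsClosed carrier

namespace NEClosed

variable {X : Type u} [TopologicalSpace X]

/-- The basic Vietoris set `⟨𝒱⟩` determined by a family `𝒱` of subsets of `X`. -/
def basicSet (𝒱 : Set (Set X)) : Set (NEClosed X) :=
  {S | S.carrier ⊆ ⋃₀ 𝒱 ∧ ∀ V ∈ 𝒱, (S.carrier ∩ V).Nonempty}

/-- The Vietoris topology on `𝓕(X)`, generated by the sets `⟨𝒱⟩` where `𝒱` runs over the
finite families of open subsets of `X`. -/
instance : TopologicalSpace (NEClosed X) :=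
  TopologicalSpace.generateFrom
    {t | ∃ 𝒱 : Set (Set X), 𝒱.Finite ∧ (∀ V ∈ 𝒱, IsOpen V) ∧ t = basicSet 𝒱}

/-- The trace of a nonempty closed set `S` on a subspace `A` which it meets, as a nonempty
closed subset of `A`. -/
def trace (S : NEClosed X) (A : Set X) (h : (S.carrier ∩ A).Nonempty) : NEClosed A where
  carrier := Subtype.val ⁻¹' S.carrier
  nonempty' := ⟨⟨h.choose, h.choose_spec.2⟩, h.choose_spec.1⟩
  closed' := S.closed'.preimage continuous_subtype_val

end NEClosed

/-- `f` is a Vietoris continuous selection for `𝓕(X)`. -/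
def IsVSelection {X : Type u} [TopologicalSpace X] (f : NEClosed X → X) : Prop :=
  Continuous f ∧ ∀ S : NEClosed X, f S ∈ S.carrier

/-- `f` is a `p`-maximal selection: `f S = p` whenever `p ∈ S`. -/
def PMaximal {X : Type u} [TopologicalSpace X] (f : NEClosed X → X) (p : X) : Prop :=
  ∀ S : NEClosed X, p ∈ S.carrier → f S = p

/-- `f` is a `p`-minimal selection: `f S ≠ p` whenever `S ≠ {p}`. -/
def PMinimal {X : Type u} [TopologicalSpace X] (f : NEClosed X → X) (p : X) : Prop :=
  ∀ S : NEClosed X, S.carrier ≠ {p} → f S ≠ p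

/-- `H` is clopen modulo the point `p`: `H` is a nonempty closed set, `p ∈ H`, and
`H \ {p}` is open. -/
def ClopenModulo {X : Type u} [TopologicalSpace X] (H : Set X) (p : X) : Prop :=
  H.Nonempty ∧ IsClosed H ∧ p ∈ H ∧ IsOpen (H \ {p})

/-- `Δ(X)`: the family of all nonempty closed subsets of `X` clopen modulo some point. -/
def DeltaSet (X : Type u) [TopologicalSpace X] : Set (Set X) :=
  {H | ∃ p, ClopenModulo H p}

/-- `Δ_ω(X)`: all `H ∈ Δ(X)` such that `H` is clopen, or `H` is clopen modulo a point `q`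
at which `H` (with the subspace topology) has a countable neighbourhood base. -/
def DeltaOmegaSet (X : Type u) [TopologicalSpace X] : Set (Set X) :=
  {H | H ∈ DeltaSet X ∧ (IsClopen H ∨ ∃ q, ∃ hq : q ∈ H,
    ClopenModulo H q ∧ (𝓝 (⟨q, hq⟩ : H)).IsCountablyGenerated)}

/-- The set `[V]_f = {x : f(Vᶜ ∪ {x}) = x}` for an open set `V`. -/
def bracketSel {X : Type u} [TopologicalSpace X] [T1Space X]
    (f : NEClosed X → X) (V : Set X) (hV : IsOpen V) : Set X :=
  {x | f ⟨Vᶜ ∪ {x}, ⟨x, Or.inr rfl⟩, hV.isClosed_compl.union isClosed_singleton⟩ = x}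

/-- The set `⟨V⟩_f = [V]_f ∩ V` for an open set `V`. -/
def angleSel {X : Type u} [TopologicalSpace X] [T1Space X]
    (f : NEClosed X → X) (V : Set X) (hV : IsOpen V) : Set X :=
  bracketSel f V hV ∩ V

/-- A quasi-ordinal decomposition of `X`: a continuous surjection onto a compact ordinal
space `[0, γ]` all of whose fibers are clopen modulo a point. -/
def IsQuasiOrdDecomp {X : Type u} [TopologicalSpace X] (γ : Ordinal.{u})
    (η : X → Set.Iic γ) : Prop :=
  Continuous η ∧ Function.Surjective η ∧ ∀ α : Set.Iic γ, η ⁻¹' {α} ∈ DeltaSet X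

/-- An ordinal decomposition of `X`: a closed quotient map onto a compact ordinal space
`[0, γ]` all of whose fibers are clopen modulo a point. -/
def IsOrdDecomp {X : Type u} [TopologicalSpace X] (γ : Ordinal.{u})
    (η : X → Set.Iic γ) : Prop :=
  IsQuotientMap η ∧ IsClosedMap η ∧ ∀ α : Set.Iic γ, η ⁻¹' {α} ∈ DeltaSet X

section Aux

variable {X : Type u} [TopologicalSpace X] [T2Space X]

omit [T2Space X] in
theorem NEClosed.ext' {S T : NEClosed X} (h : S.carrier = T.carrier) : S = T := by
  cases S; cases T; simpa using h

theorem continuous_unionSingleton (C : Set X) (hC : IsClosed C) :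
    Continuous fun x : X =>
      (⟨C ∪ {x}, ⟨x, Or.inr rfl⟩, hC.union isClosed_singleton⟩ : NEClosed X) := by
  apply continuous_generateFrom_iff.mpr
  rintro s ⟨𝒱, hfin, hop, rfl⟩
  rw [isOpen_iff_forall_mem_open]
  intro x hx
  obtain ⟨hsub, hmeet⟩ := hx
  refine ⟨⋂₀ {W ∈ 𝒱 | x ∈ W}, ?_, ?_, ?_⟩
  · intro y hy
    constructor
    · rintro z (hz | rfl)
      · exact hsub (Or.inl hz)
      · obtain ⟨W, hW𝒱, hxW⟩ := mem_sUnion.mp (hsub (Or.inr rfl))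
        exact ⟨W, hW𝒱, mem_sInter.mp hy W ⟨hW𝒱, hxW⟩⟩
    · intro V hV
      obtain ⟨z, hz1, hz2⟩ := hmeet V hV
      rcases hz1 with hz | rfl
      · exact ⟨z, Or.inl hz, hz2⟩
      · exact ⟨y, Or.inr rfl, mem_sInter.mp hy V ⟨hV, hz2⟩⟩
  · exact (hfin.sep _).isOpen_sInter fun W hW => hop W hW.1
  · exact mem_sInter.mpr fun W hW => hW.2

theorem isOpen_angleSel {f : NEClosed X → X} (hf : IsVSelection f) (V : Set X) (hV : IsOpen V) :
    IsOpen (angleSel f V hV) := by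
  have hgc : Continuous (fun x : X =>
      f ⟨Vᶜ ∪ {x}, ⟨x, Or.inr rfl⟩, hV.isClosed_compl.union isClosed_singleton⟩) :=
    hf.1.comp (continuous_unionSingleton Vᶜ hV.isClosed_compl)
  have heq : angleSel f V hV = V ∩ (fun x : X =>
      f ⟨Vᶜ ∪ {x}, ⟨x, Or.inr rfl⟩, hV.isClosed_compl.union isClosed_singleton⟩) ⁻¹' V := by
    ext x
    constructor
    · rintro ⟨hx1, hx2⟩
      refine ⟨hx2, ?_⟩
      have hx1' : f ⟨Vᶜ ∪ {x}, ⟨x, Or.inr rfl⟩, hV.isClosed_compl.union isClosed_singleton⟩ = x :=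
        hx1
      show f ⟨Vᶜ ∪ {x}, ⟨x, Or.inr rfl⟩, hV.isClosed_compl.union isClosed_singleton⟩ ∈ V
      rw [hx1']; exact hx2
    · rintro ⟨hx1, hx2⟩
      have hmem := hf.2 ⟨Vᶜ ∪ {x}, ⟨x, Or.inr rfl⟩, hV.isClosed_compl.union isClosed_singleton⟩
      refine ⟨?_, hx1⟩
      rcases hmem with hm | hm
      · exact absurd hx2 hm
      · exact hm
  rw [heq]
  exact hV.inter (hV.preimage hgc)

omit [T2Space X] in
theorem vietoris_tendsto {ι : Type*} [SemilatticeSup ι] [Nonempty ι]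
    (S : ι → NEClosed X) (K : NEClosed X)
    (hsub : ∀ i, (S i).carrier ⊆ K.carrier)
    (hmeets : ∀ W, IsOpen W → (K.carrier ∩ W).Nonempty →
      ∃ i₀, ∀ i, i₀ ≤ i → ((S i).carrier ∩ W).Nonempty) :
    Filter.Tendsto S Filter.atTop (𝓝 K) := by
  apply TopologicalSpace.tendsto_nhds_generateFrom_iff.mpr
  rintro s ⟨𝒱, hfin, hop, rfl⟩ hK
  have h1 : ∀ W ∈ 𝒱, ∀ᶠ i in atTop, ((S i).carrier ∩ W).Nonempty := by
    intro W hW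
    obtain ⟨i₀, hi₀⟩ := hmeets W (hop W hW) (hK.2 W hW)
    exact (eventually_ge_atTop i₀).mono fun i hi => hi₀ i hi
  have h2 : ∀ᶠ i in atTop, ∀ W ∈ 𝒱, ((S i).carrier ∩ W).Nonempty :=
    (eventually_all_finite hfin).mpr h1
  filter_upwards [h2] with i hi
  exact ⟨(hsub i).trans hK.1, hi⟩

end Aux

/-- For a limit ordinal `λ` and open sets `U α`, `α < λ`, with
`cl (U (α+1)) ⊊ ⟨U α⟩_f ⊆ U β` for all `β ≤ α < λ`: putting `H = ⋂_{α<λ} U α` and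
`F = cl (Hᶜ)`, we have `H = [Fᶜ]_f`, the family `{U α : α < λ}` is a local base at `H`,
and both `H` and `F` are clopen modulo the point `f(F)`. -/
theorem stmt_13 {X : Type u} [TopologicalSpace X] [T2Space X]
    (lam : Ordinal.{v}) (hlam : Order.IsSuccLimit lam)
    (f : NEClosed X → X) (hf : IsVSelection f)
    (U : Ordinal.{v} → Set X) (hUo : ∀ α, α < lam → IsOpen (U α))
    (hch : ∀ (β α : Ordinal.{v}), β ≤ α → ∀ hα : α < lam,
      closure (U (α + 1)) ⊂ angleSel f (U α) (hUo α hα) ∧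
      angleSel f (U α) (hUo α hα) ⊆ U β) :
    let H : Set X := ⋂ α ∈ Set.Iio lam, U α
    let F : Set X := closure Hᶜ
    H = bracketSel f Fᶜ (isOpen_compl_iff.mpr isClosed_closure) ∧
    (∀ V : Set X, IsOpen V → H ⊆ V → ∃ α < lam, U α ⊆ V) ∧
    ∃ hF : F.Nonempty, ClopenModulo H (f ⟨F, hF, isClosed_closure⟩) ∧
      ClopenModulo F (f ⟨F, hF, isClosed_closure⟩) := by
  intro H F
  haveI : Nonempty (Set.Iio lam) := ⟨⟨0, hlam.pos⟩⟩
  have hsucc : ∀ {α : Ordinal.{v}}, α < lam → α + 1 < lam := fun {α} h => by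
    rw [Ordinal.add_one_eq_succ]; exact hlam.succ_lt h
  have hUmono : ∀ β α : Ordinal.{v}, β ≤ α → ∀ hα : α < lam, U (α + 1) ⊆ U β :=
    fun β α h hα =>
      (subset_closure.trans (hch β α h hα).1.subset).trans (hch β α h hα).2
  have hHsub : ∀ γ, γ < lam → H ⊆ U γ := fun γ hγ => biInter_subset_of_mem hγ
  have hHcl : IsClosed H := by
    have heq : H = ⋂ γ ∈ Set.Iio lam, closure (U γ) := by
      apply Subset.antisymm
      · exact iInter₂_mono fun γ _ => subset_closure
      · intro x hx
        apply mem_iInter₂.mpr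
        intro β hβ
        have h1 : x ∈ closure (U (β + 1)) := mem_iInter₂.mp hx (β + 1) (hsucc hβ)
        exact (hch β β le_rfl hβ).2 ((hch β β le_rfl hβ).1.subset h1)
    rw [heq]
    exact isClosed_biInter fun γ _ => isClosed_closure
  -- F is nonempty
  obtain ⟨w0, hw0a, hw0b⟩ := exists_of_ssubset (hch 0 0 le_rfl hlam.pos).1
  have hw0H : w0 ∈ Hᶜ := fun hmem =>
    hw0b (subset_closure (hHsub (0 + 1) (hsucc hlam.pos) hmem))
  have hFne : F.Nonempty := ⟨w0, subset_closure hw0H⟩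
  set p : X := f ⟨F, hFne, isClosed_closure⟩ with hp
  have hpF : p ∈ F := hf.2 ⟨F, hFne, isClosed_closure⟩
  -- basic "meeting" lemma
  have hmeet0 : ∀ W : Set X, IsOpen W → (F ∩ W).Nonempty →
      ∃ β : Set.Iio lam, ∀ α : Set.Iio lam, β ≤ α → ((U (α.1 + 1))ᶜ ∩ W).Nonempty := by
    rintro W hW ⟨y, hyF, hyW⟩
    obtain ⟨x₀, hx₀W, hx₀H⟩ := mem_closure_iff.mp hyF W hW hyW
    obtain ⟨β, hβ, hx₀β⟩ : ∃ β < lam, x₀ ∉ U β := by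
      by_contra hcon
      push_neg at hcon
      exact hx₀H (mem_iInter₂.mpr hcon)
    exact ⟨⟨β, hβ⟩, fun α hα =>
      ⟨x₀, fun hx => hx₀β (hUmono β α.1 hα α.2 hx), hx₀W⟩⟩
  -- direction A : x ∈ H → f (F ∪ {x}) = x
  have dirA : ∀ x, x ∈ H →
      f ⟨F ∪ {x}, ⟨x, Or.inr rfl⟩, isClosed_closure.union isClosed_singleton⟩ = x := by
    intro x hx
    have hxang : ∀ α : Set.Iio lam,
        x ∈ angleSel f (U (α.1 + 1)) (hUo _ (hsucc α.2)) := fun α =>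
      (hch (α.1 + 1) (α.1 + 1) le_rfl (hsucc α.2)).1.subset
        (subset_closure (hHsub (α.1 + 1 + 1) (hsucc (hsucc α.2)) hx))
    have hT : Filter.Tendsto (fun α : Set.Iio lam =>
        (⟨(U (α.1 + 1))ᶜ ∪ {x}, ⟨x, Or.inr rfl⟩,
          (hUo _ (hsucc α.2)).isClosed_compl.union isClosed_singleton⟩ : NEClosed X))
        Filter.atTop
        (𝓝 ⟨F ∪ {x}, ⟨x, Or.inr rfl⟩, isClosed_closure.union isClosed_singleton⟩) := by
      apply vietoris_tendsto
      · intro i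
        rintro z (hz | rfl)
        · exact Or.inl (subset_closure fun hzH => hz (hHsub _ (hsucc i.2) hzH))
        · exact Or.inr rfl
      · rintro W hW ⟨y, hy | rfl, hyW⟩
        · obtain ⟨β, hβ⟩ := hmeet0 W hW ⟨y, hy, hyW⟩
          exact ⟨β, fun α hα => by
            obtain ⟨a, h1, h2⟩ := hβ α hα; exact ⟨a, Or.inl h1, h2⟩⟩
        · exact ⟨⟨0, hlam.pos⟩, fun α _ => ⟨y, Or.inr rfl, hyW⟩⟩
    have hcomp := (hf.1.tendsto _).comp hT
    exact tendsto_nhds_unique (hcomp.congr fun α => (hxang α).1) tendsto_const_nhds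
  -- p ∈ H
  have hwch := fun α : Set.Iio lam =>
    exists_of_ssubset (hch (α.1 + 1) (α.1 + 1) le_rfl (hsucc α.2)).1
  choose w hw1 hw2 using hwch
  have hwH : ∀ α : Set.Iio lam, w α ∈ Hᶜ := fun α hmem =>
    hw2 α (subset_closure (hHsub (α.1 + 1 + 1) (hsucc (hsucc α.2)) hmem))
  have hTB : Filter.Tendsto (fun α : Set.Iio lam =>
      (⟨(U (α.1 + 1))ᶜ ∪ {w α}, ⟨w α, Or.inr rfl⟩,
        (hUo _ (hsucc α.2)).isClosed_compl.union isClosed_singleton⟩ : NEClosed X))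
      Filter.atTop (𝓝 ⟨F, hFne, isClosed_closure⟩) := by
    apply vietoris_tendsto
    · intro i
      rintro z (hz | rfl)
      · exact subset_closure fun hzH => hz (hHsub _ (hsucc i.2) hzH)
      · exact subset_closure (hwH i)
    · intro W hW hFW
      obtain ⟨β, hβ⟩ := hmeet0 W hW hFW
      exact ⟨β, fun α hα => by
        obtain ⟨a, h1, h2⟩ := hβ α hα; exact ⟨a, Or.inl h1, h2⟩⟩
  have hwp : Filter.Tendsto w Filter.atTop (𝓝 p) :=
    ((hf.1.tendsto _).comp hTB).congr fun α => (hw1 α).1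
  have hpU : ∀ γ, γ < lam → p ∈ closure (U γ) := by
    intro γ hγ
    apply isClosed_closure.mem_of_tendsto hwp
    filter_upwards [Filter.eventually_ge_atTop (⟨γ, hγ⟩ : Set.Iio lam)] with α hα
    have hle : γ ≤ α.1 + 1 := le_trans hα le_self_add
    exact subset_closure ((hch γ (α.1 + 1) hle (hsucc α.2)).2 (hw1 α))
  have hpH : p ∈ H := mem_iInter₂.mpr fun β hβ =>
    (hch β β le_rfl hβ).2 ((hch β β le_rfl hβ).1.subset (hpU (β + 1) (hsucc hβ)))
  -- claim 1
  have hFc_sub_H : Fᶜ ⊆ H := by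
    intro x hx
    by_contra hxH
    exact hx (subset_closure hxH)
  have hmkeq : ∀ x : X,
      (⟨Fᶜᶜ ∪ {x}, ⟨x, Or.inr rfl⟩,
        (isOpen_compl_iff.mpr isClosed_closure).isClosed_compl.union isClosed_singleton⟩ :
          NEClosed X)
      = ⟨F ∪ {x}, ⟨x, Or.inr rfl⟩, isClosed_closure.union isClosed_singleton⟩ :=
    fun x => NEClosed.ext' (by show Fᶜᶜ ∪ {x} = F ∪ {x}; rw [compl_compl])
  have hunion : ∀ x : X, x ∈ F →
      (⟨F ∪ {x}, ⟨x, Or.inr rfl⟩, isClosed_closure.union isClosed_singleton⟩ : NEClosed X)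
        = ⟨F, hFne, isClosed_closure⟩ :=
    fun x hx => NEClosed.ext' (by show F ∪ {x} = F; exact union_eq_self_of_subset_right (singleton_subset_iff.mpr hx))
  have claim1 : H = bracketSel f Fᶜ (isOpen_compl_iff.mpr isClosed_closure) := by
    ext x
    constructor
    · intro hx
      show f _ = x
      rw [hmkeq x]
      exact dirA x hx
    · intro hx
      have hx' : f ⟨F ∪ {x}, ⟨x, Or.inr rfl⟩,
          isClosed_closure.union isClosed_singleton⟩ = x := by
        rw [← hmkeq x]; exact hx
      by_cases hxF : x ∈ F
      · rw [hunion x hxF] at hx'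
        rw [← hx']
        exact hpH
      · exact hFc_sub_H hxF
  have hHF : ∀ x, x ∈ H → x ∈ F → x = p := by
    intro x hxH hxF
    have h1 := dirA x hxH
    rw [hunion x hxF] at h1
    exact h1.symm
  -- ClopenModulo H p
  have hHmp : H \ {p} = angleSel f Fᶜ (isOpen_compl_iff.mpr isClosed_closure) \ {p} := by
    ext x
    constructor
    · rintro ⟨hxH, hxp⟩
      have hxF : x ∉ F := fun hxF => hxp (hHF x hxH hxF)
      refine ⟨⟨?_, hxF⟩, hxp⟩
      rw [← claim1]; exact hxH
    · rintro ⟨⟨hx1, _⟩, hxp⟩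
      refine ⟨?_, hxp⟩
      rw [claim1]; exact hx1
  have clopenH : ClopenModulo H p :=
    ⟨⟨p, hpH⟩, hHcl, hpH, by
      rw [hHmp]
      exact (isOpen_angleSel hf _ _).sdiff isClosed_singleton⟩
  -- ClopenModulo F p
  have hFsd : F \ {p} = (Fᶜ ∪ {p})ᶜ := by
    ext x
    simp only [mem_diff, mem_singleton_iff, mem_compl_iff, mem_union, not_or, not_not]
  have hclFc : IsClosed (Fᶜ ∪ {p}) := by
    apply isClosed_of_closure_subset
    rw [closure_union, closure_singleton]
    rintro x (hx | hx)
    · by_cases hxF : x ∈ F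
      · exact Or.inr (hHF x (closure_minimal hFc_sub_H hHcl hx) hxF)
      · exact Or.inl hxF
    · exact Or.inr hx
  have clopenF : ClopenModulo F p := ⟨hFne, isClosed_closure, hpF, by
    rw [hFsd]; exact hclFc.isOpen_compl⟩
  -- local base
  have localbase : ∀ V : Set X, IsOpen V → H ⊆ V → ∃ α < lam, U α ⊆ V := by
    intro V hV hHV
    by_cases hcase : ∃ α : Set.Iio lam, angleSel f (U (α.1 + 1)) (hUo _ (hsucc α.2)) ⊆ V
    · obtain ⟨α, hα⟩ := hcase
      refine ⟨α.1 + 1 + 1, hsucc (hsucc α.2), ?_⟩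
      exact (subset_closure.trans (hch (α.1 + 1) (α.1 + 1) le_rfl (hsucc α.2)).1.subset).trans hα
    · push_neg at hcase
      have hex : ∀ α : Set.Iio lam,
          ∃ u, u ∈ angleSel f (U (α.1 + 1)) (hUo _ (hsucc α.2)) ∧ u ∉ V :=
        fun α => not_subset.mp (hcase α)
      choose u hu1 hu2 using hex
      have huH : ∀ α, u α ∈ Hᶜ := fun α hmem => hu2 α (hHV hmem)
      have hTC : Filter.Tendsto (fun α : Set.Iio lam =>
          (⟨(U (α.1 + 1))ᶜ ∪ {u α}, ⟨u α, Or.inr rfl⟩,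
            (hUo _ (hsucc α.2)).isClosed_compl.union isClosed_singleton⟩ : NEClosed X))
          Filter.atTop (𝓝 ⟨F, hFne, isClosed_closure⟩) := by
        apply vietoris_tendsto
        · intro i
          rintro z (hz | rfl)
          · exact subset_closure fun hzH => hz (hHsub _ (hsucc i.2) hzH)
          · exact subset_closure (huH i)
        · intro W hW hFW
          obtain ⟨β, hβ⟩ := hmeet0 W hW hFW
          exact ⟨β, fun α hα => by
            obtain ⟨a, h1, h2⟩ := hβ α hα; exact ⟨a, Or.inl h1, h2⟩⟩
      have hup : Filter.Tendsto u Filter.atTop (𝓝 p) :=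
        ((hf.1.tendsto _).comp hTC).congr fun α => (hu1 α).1
      have hev : ∀ᶠ α in Filter.atTop, u α ∈ V := hup (hV.mem_nhds (hHV hpH))
      obtain ⟨α, hα⟩ := hev.exists
      exact absurd hα (hu2 α)
  exact ⟨claim1, localbase, hFne, clopenH, clopenF⟩
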